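/- arXiv:1406.2649 — 4 statements merged into one kernel-verified Lean document; each statement's English description precedes it below -/
import Mathlib

section
/- The operator [∂_r]^{-1} defined by ([∂_r]^{-1}f)(r) = -∫_r^∞ f(s) ds maps L^1((0,∞), r dr) boundedly into L^2((0,∞), r dr): there is a universal constant C with ‖∫_r^∞ f(s) ds‖_{L^2(r dr)} ≤ C ‖f‖_{L^1(r dr)}. -/
open MeasureTheory Set
open scoped ENNReal NNReal

/-- The measure `r dr` on `(0, ∞)` (radial functions on `ℝ²`). -/
noncomputable def rdr : Measure ℝ :=
  (volume.restrict (Ioi (0:ℝ))).withDensity (fun r => ENNReal.ofReal r)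

/-- The operator `[∂_r]⁻¹ f (r) = -∫_r^∞ f(s) ds` maps `L¹((0,∞), r dr)` boundedly into
`L²((0,∞), r dr)`. -/
theorem L1_to_L2_antideriv_bound :
    ∃ C : ℝ≥0∞, C ≠ ⊤ ∧ ∀ f : ℝ → ℂ, Measurable f →
      eLpNorm (fun r => -∫ s in Ioi r, f s) 2 rdr ≤ C * eLpNorm f 1 rdr := by
  refine ⟨1, ENNReal.one_ne_top, fun f hf => ?_⟩
  set h : ℝ → ℝ≥0∞ := fun s => (‖f s‖₊ : ℝ≥0∞) with hh
  have hmeas : Measurable h := hf.enorm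
  set G : ℝ → ℝ≥0∞ := fun r => ∫⁻ s in Ioi r, h s with hGdef
  set A : ℝ≥0∞ := ∫⁻ s in Ioi (0:ℝ), ENNReal.ofReal s * h s with hAdef
  have hdens : ∀ᵐ x ∂(volume.restrict (Ioi (0:ℝ))), ENNReal.ofReal x < ∞ :=
    ae_of_all _ fun x => ENNReal.ofReal_lt_top
  have hGanti : Antitone G := fun a b hab =>
    lintegral_mono_set (fun x hx => lt_of_le_of_lt hab hx)
  have hGmeas : Measurable G := hGanti.measurable
  -- `A` is the `L¹(rdr)` norm of `f`.
  have hA1 : eLpNorm f 1 rdr = A := by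
    rw [eLpNorm_one_eq_lintegral_enorm, rdr,
      lintegral_withDensity_eq_lintegral_mul_non_measurable _ ENNReal.measurable_ofReal hdens]
    rfl
  -- key pointwise bound : r * G r ≤ A for r > 0
  have key : ∀ r : ℝ, 0 < r → ENNReal.ofReal r * G r ≤ A := by
    intro r hr
    calc ENNReal.ofReal r * G r = ∫⁻ s in Ioi r, ENNReal.ofReal r * h s :=
          (lintegral_const_mul _ hmeas).symm
      _ ≤ ∫⁻ s in Ioi r, ENNReal.ofReal s * h s :=
          setLIntegral_mono' measurableSet_Ioi fun s hs =>
            mul_le_mul_left (ENNReal.ofReal_le_ofReal (le_of_lt hs)) _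
      _ ≤ A := lintegral_mono_set (Ioi_subset_Ioi hr.le)
  -- Tonelli : ∫_{r>0} G r dr = A
  have tonelli : ∫⁻ r in Ioi (0:ℝ), G r ∂volume = A := by
    have hK : Measurable fun p : ℝ × ℝ => {q : ℝ × ℝ | q.1 < q.2}.indicator
        (fun q => h q.2) p :=
      ((hmeas.comp measurable_snd).indicator (measurableSet_lt measurable_fst measurable_snd))
    have e1 : ∀ r : ℝ, G r = ∫⁻ s, {q : ℝ × ℝ | q.1 < q.2}.indicator
        (fun q => h q.2) (r, s) ∂volume := by
      intro r
      show (∫⁻ s in Ioi r, h s) = _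
      rw [← lintegral_indicator measurableSet_Ioi]
      refine lintegral_congr fun s => ?_
      by_cases hs : r < s
      · simp [Set.indicator_of_mem, hs, Set.mem_Ioi]
      · simp [Set.indicator_of_notMem, hs, Set.mem_Ioi]
    calc ∫⁻ r in Ioi (0:ℝ), G r ∂volume
        = ∫⁻ r in Ioi (0:ℝ), ∫⁻ s, {q : ℝ × ℝ | q.1 < q.2}.indicator
            (fun q => h q.2) (r, s) ∂volume ∂volume := by
          exact lintegral_congr fun r => e1 r
      _ = ∫⁻ s, ∫⁻ r in Ioi (0:ℝ), {q : ℝ × ℝ | q.1 < q.2}.indicator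
            (fun q => h q.2) (r, s) ∂volume ∂volume := by
          exact lintegral_lintegral_swap hK.aemeasurable
      _ = ∫⁻ s, ENNReal.ofReal s * h s ∂volume := by
          refine lintegral_congr fun s => ?_
          have e2 : ∀ r : ℝ, {q : ℝ × ℝ | q.1 < q.2}.indicator (fun q => h q.2) (r, s)
              = (Iio s).indicator (fun _ => h s) r := by
            intro r
            by_cases hrs : r < s
            · simp [Set.indicator_of_mem, hrs, Set.mem_Iio]
            · simp [Set.indicator_of_notMem, hrs, Set.mem_Iio]
          rw [lintegral_congr e2, lintegral_indicator_const measurableSet_Iio,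
            Measure.restrict_apply measurableSet_Iio]
          have : Iio s ∩ Ioi (0:ℝ) = Ioo 0 s := by
            ext x; simp [Set.mem_Ioo, and_comm]
          rw [this, Real.volume_Ioo, sub_zero, mul_comm]
      _ = A := by
          rw [hAdef, ← lintegral_indicator measurableSet_Ioi]
          refine lintegral_congr fun s => ?_
          by_cases hs : (0:ℝ) < s
          · simp [Set.indicator_of_mem, hs, Set.mem_Ioi]
          · simp [Set.indicator_of_notMem, hs, Set.mem_Ioi,
              ENNReal.ofReal_eq_zero.2 (not_lt.1 hs)]
  -- main estimate
  have hFG : ∀ r : ℝ, (‖-∫ s in Ioi r, f s‖₊ : ℝ≥0∞) ≤ G r := by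
    intro r
    rw [nnnorm_neg]
    exact (enorm_integral_le_lintegral_enorm _)
  have main : ∫⁻ r, (‖-∫ s in Ioi r, f s‖₊ : ℝ≥0∞) ^ (2:ℝ) ∂rdr ≤ A * A := by
    rw [rdr, lintegral_withDensity_eq_lintegral_mul_non_measurable _
      ENNReal.measurable_ofReal hdens]
    calc ∫⁻ r in Ioi (0:ℝ), ((fun r => ENNReal.ofReal r) *
            fun r => (‖-∫ s in Ioi r, f s‖₊ : ℝ≥0∞) ^ (2:ℝ)) r ∂volume
        ≤ ∫⁻ r in Ioi (0:ℝ), A * G r ∂volume := by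
          refine setLIntegral_mono' measurableSet_Ioi fun r hr => ?_
          have h2 : ((‖-∫ s in Ioi r, f s‖₊ : ℝ≥0∞)) ^ (2:ℝ) ≤ G r * G r := by
            rw [show ((2:ℝ)) = ((2:ℕ):ℝ) by norm_num, ENNReal.rpow_natCast, pow_two]
            exact mul_le_mul' (hFG r) (hFG r)
          calc ((fun r => ENNReal.ofReal r) *
                fun r => (‖-∫ s in Ioi r, f s‖₊ : ℝ≥0∞) ^ (2:ℝ)) r
              = ENNReal.ofReal r * (‖-∫ s in Ioi r, f s‖₊ : ℝ≥0∞) ^ (2:ℝ) := rfl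
            _ ≤ ENNReal.ofReal r * (G r * G r) := mul_le_mul_right h2 _
            _ = (ENNReal.ofReal r * G r) * G r := by ring
            _ ≤ A * G r := mul_le_mul_left (key r hr) _
      _ = A * ∫⁻ r in Ioi (0:ℝ), G r ∂volume := lintegral_const_mul _ hGmeas
      _ = A * A := by rw [tonelli]
  have h2 : eLpNorm (fun r => -∫ s in Ioi r, f s) 2 rdr
      = (∫⁻ r, (‖-∫ s in Ioi r, f s‖₊ : ℝ≥0∞) ^ (2:ℝ) ∂rdr) ^ (1/(2:ℝ)) := by
    rw [eLpNorm_eq_lintegral_rpow_enorm_toReal (by norm_num) (by norm_num)]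
    norm_num
    rfl
  rw [h2, hA1, one_mul]
  calc (∫⁻ r, (‖-∫ s in Ioi r, f s‖₊ : ℝ≥0∞) ^ (2:ℝ) ∂rdr) ^ (1/(2:ℝ))
      ≤ (A * A) ^ (1/(2:ℝ)) := ENNReal.rpow_le_rpow main (by norm_num)
    _ = A := by
        rw [← pow_two, ← ENNReal.rpow_natCast A 2, ← ENNReal.rpow_mul]
        norm_num
end

section
/- Define A_0(r) = (1/2)∫_r^∞ ρ(s) (∫_0^s ρ(u) u du) ds/s for nonnegative ρ. Then for 1 ≤ p < ∞ there is a constant C_p with ‖A_0‖_{L^p(ℝ²)} ≤ C_p ‖ρ‖_{L^1(ℝ²)} ‖ρ‖_{L^p(ℝ²)}, where norms are radial L^p norms on ℝ². -/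
open MeasureTheory Set
open scoped ENNReal NNReal

lemma ofReal_int_le (f : ℝ → ℝ) (μ : Measure ℝ) (hf : 0 ≤ᵐ[μ] f) :
    ENNReal.ofReal (∫ x, f x ∂μ) ≤ ∫⁻ x, ENNReal.ofReal (f x) ∂μ := by
  by_cases hi : Integrable f μ
  · rw [ofReal_integral_eq_lintegral_ofReal hi hf]
  · rw [integral_undef hi]; simp

lemma tonelli_tri (w G : ℝ → ℝ≥0∞) (hw : Measurable w) (hG : Measurable G) :
    ∫⁻ r in Ioi (0:ℝ), w r * ∫⁻ s in Ioi r, G s =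
      ∫⁻ s in Ioi (0:ℝ), G s * ∫⁻ r in Ioo 0 s, w r := by
  have hmeas : Measurable (Function.uncurry fun r s : ℝ =>
      w r * {z : ℝ × ℝ | z.1 < z.2}.indicator (fun z => G z.2) (r, s)) := by
    apply (hw.comp measurable_fst).mul
    have := (hG.comp measurable_snd).indicator (measurableSet_lt measurable_fst measurable_snd)
    exact this
  calc ∫⁻ r in Ioi (0:ℝ), w r * ∫⁻ s in Ioi r, G s
      = ∫⁻ r in Ioi (0:ℝ), ∫⁻ s in Ioi (0:ℝ),
          w r * {z : ℝ × ℝ | z.1 < z.2}.indicator (fun z => G z.2) (r, s) := by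
        refine setLIntegral_congr_fun measurableSet_Ioi (fun r hr => ?_)
        have : ∀ s, {z : ℝ × ℝ | z.1 < z.2}.indicator (fun z => G z.2) (r, s)
            = (Ioi r).indicator G s := by
          intro s; by_cases h : r < s <;> simp [Set.indicator_apply, h, Set.mem_Ioi]
        simp_rw [this]
        rw [lintegral_const_mul _ (hG.indicator measurableSet_Ioi),
          lintegral_indicator measurableSet_Ioi, Measure.restrict_restrict measurableSet_Ioi,
          inter_eq_left.mpr (Ioi_subset_Ioi (le_of_lt hr))]
    _ = ∫⁻ s in Ioi (0:ℝ), ∫⁻ r in Ioi (0:ℝ),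
          w r * {z : ℝ × ℝ | z.1 < z.2}.indicator (fun z => G z.2) (r, s) :=
        lintegral_lintegral_swap hmeas.aemeasurable
    _ = ∫⁻ s in Ioi (0:ℝ), G s * ∫⁻ r in Ioo 0 s, w r := by
        refine setLIntegral_congr_fun measurableSet_Ioi (fun s hs => ?_)
        have : ∀ r, w r * {z : ℝ × ℝ | z.1 < z.2}.indicator (fun z => G z.2) (r, s)
            = (Iio s).indicator (fun r => w r * G s) r := by
          intro r; by_cases h : r < s <;> simp [Set.indicator_apply, h, Set.mem_Iio]
        simp_rw [this]
        rw [lintegral_indicator measurableSet_Iio, Measure.restrict_restrict measurableSet_Iio,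
          Set.inter_comm, Set.Ioi_inter_Iio, lintegral_mul_const _ hw, mul_comm]

theorem hardy' {p : ℝ} (hp : 1 ≤ p) :
    ∃ CH : ℝ≥0∞, CH ≠ ⊤ ∧ ∀ F : ℝ → ℝ≥0∞, Measurable F →
      ∫⁻ r in Ioi (0:ℝ), (∫⁻ s in Ioi r, F s * (ENNReal.ofReal s)⁻¹) ^ p * ENNReal.ofReal r
        ≤ CH * ∫⁻ s in Ioi (0:ℝ), F s ^ p * ENNReal.ofReal s := by
  rcases eq_or_lt_of_le hp with heq | hlt
  · -- p = 1
    refine ⟨1, ENNReal.one_ne_top, fun F hF => ?_⟩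
    rw [← heq, one_mul]
    simp only [ENNReal.rpow_one]
    calc ∫⁻ r in Ioi (0:ℝ), (∫⁻ s in Ioi r, F s * (ENNReal.ofReal s)⁻¹) * ENNReal.ofReal r
        = ∫⁻ r in Ioi (0:ℝ), ENNReal.ofReal r * ∫⁻ s in Ioi r, F s * (ENNReal.ofReal s)⁻¹ := by
          simp_rw [mul_comm]
      _ = ∫⁻ s in Ioi (0:ℝ), (F s * (ENNReal.ofReal s)⁻¹) * ∫⁻ r in Ioo 0 s, ENNReal.ofReal r :=
          tonelli_tri _ _ ENNReal.measurable_ofReal (hF.mul (ENNReal.measurable_ofReal.inv))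
      _ ≤ ∫⁻ s in Ioi (0:ℝ), F s * ENNReal.ofReal s := by
          refine setLIntegral_mono (hF.mul ENNReal.measurable_ofReal) fun s hs => ?_
          have hs0 : (0:ℝ) < s := hs
          have h1 : ∫⁻ r in Ioo (0:ℝ) s, ENNReal.ofReal r
              ≤ ENNReal.ofReal s * ENNReal.ofReal s := by
            calc ∫⁻ r in Ioo (0:ℝ) s, ENNReal.ofReal r
                ≤ ∫⁻ _ in Ioo (0:ℝ) s, ENNReal.ofReal s :=
                  setLIntegral_mono measurable_const fun r hr =>
                    ENNReal.ofReal_le_ofReal hr.2.le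
              _ = ENNReal.ofReal s * volume (Ioo (0:ℝ) s) := setLIntegral_const _ _
              _ ≤ ENNReal.ofReal s * ENNReal.ofReal s := by
                  rw [Real.volume_Ioo]; simp
          calc F s * (ENNReal.ofReal s)⁻¹ * ∫⁻ r in Ioo (0:ℝ) s, ENNReal.ofReal r
              ≤ F s * (ENNReal.ofReal s)⁻¹ * (ENNReal.ofReal s * ENNReal.ofReal s) :=
                mul_le_mul_right h1 _
            _ = F s * ENNReal.ofReal s := by
                rw [mul_assoc, ← mul_assoc (ENNReal.ofReal s)⁻¹,
                  ENNReal.inv_mul_cancel (by simpa using hs0) ENNReal.ofReal_ne_top, one_mul]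
  · -- 1 < p
    have hp0 : p ≠ 0 := by linarith
    set q : ℝ := p / (p - 1) with hqdef
    have hq1 : 1 < q := by
      rw [hqdef, lt_div_iff₀ (by linarith)]; linarith
    have hpq : p.HolderConjugate q := (Real.holderConjugate_iff_eq_conjExponent hlt).2 hqdef
    have hqne : (0:ℝ) < q - 1 := by linarith
    set c : ℝ≥0∞ := ENNReal.ofReal ((q - 1) ^ (-(p / q))) with hcdef
    have hexp : (1 - q) * (p / q) = -1 := by
      have hpm : p - 1 ≠ 0 := by linarith
      have e2 : p / q = p - 1 := by
        rw [hqdef, div_div_eq_mul_div, mul_comm, mul_div_assoc, div_self hp0, mul_one]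
      have e3 : q * (p - 1) = p := by rw [hqdef]; field_simp
      rw [e2, show (1 - q) * (p - 1) = (p - 1) - q * (p - 1) by ring, e3]
      ring
    refine ⟨c, ENNReal.ofReal_ne_top, fun F hF => ?_⟩
    have key : ∀ r ∈ Ioi (0:ℝ),
        (∫⁻ s in Ioi r, F s * (ENNReal.ofReal s)⁻¹) ^ p * ENNReal.ofReal r
          ≤ c * ∫⁻ s in Ioi r, F s ^ p := by
      intro r hr
      have hr0 : (0:ℝ) < r := hr
      have holder := ENNReal.lintegral_mul_le_Lp_mul_Lq (volume.restrict (Ioi r)) hpq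
        hF.aemeasurable (ENNReal.measurable_ofReal.inv).aemeasurable
      simp only [Pi.mul_apply] at holder
      set X : ℝ≥0∞ := ∫⁻ s in Ioi r, F s ^ p with hXdef
      -- compute the q-integral
      have hB : ∫⁻ s in Ioi r, ((ENNReal.ofReal s)⁻¹) ^ q
          = ENNReal.ofReal (r ^ (1 - q) / (q - 1)) := by
        have h1 : ∀ s ∈ Ioi r, ((ENNReal.ofReal s)⁻¹) ^ q = ENNReal.ofReal (s ^ (-q)) := by
          intro s hs
          have hs0 : (0:ℝ) < s := hr0.trans hs
          rw [ENNReal.inv_rpow, ENNReal.ofReal_rpow_of_pos hs0,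
            ← ENNReal.ofReal_inv_of_pos (Real.rpow_pos_of_pos hs0 q),
            ← Real.rpow_neg hs0.le]
        rw [setLIntegral_congr_fun measurableSet_Ioi h1]
        rw [← ofReal_integral_eq_lintegral_ofReal
          (integrableOn_Ioi_rpow_of_lt (by linarith) hr0) ?_]
        · rw [integral_Ioi_rpow_of_lt (by linarith) hr0]
          congr 1
          rw [show -q + 1 = 1 - q by ring, show (1:ℝ) - q = -(q-1) by ring, Real.rpow_neg hr0.le,
            show -(q-1) = -(q-1) * 1 by ring, div_mul_eq_div_div, neg_div_neg_eq, div_one]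
        · filter_upwards [ae_restrict_mem measurableSet_Ioi] with s hs
          have hs0 : (0:ℝ) < s := hr0.trans hs
          positivity
      -- raise to power p
      have h2 : (∫⁻ s in Ioi r, F s * (ENNReal.ofReal s)⁻¹) ^ p
          ≤ X * (ENNReal.ofReal (r ^ (1 - q) / (q - 1))) ^ (p / q) := by
        calc (∫⁻ s in Ioi r, F s * (ENNReal.ofReal s)⁻¹) ^ p
            ≤ (X ^ (1/p) * (ENNReal.ofReal (r ^ (1 - q) / (q - 1))) ^ (1/q)) ^ p := by
              rw [← hB]
              exact ENNReal.rpow_le_rpow holder (by linarith)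
          _ = X * (ENNReal.ofReal (r ^ (1 - q) / (q - 1))) ^ (p / q) := by
              rw [ENNReal.mul_rpow_of_nonneg _ _ (by linarith : (0:ℝ) ≤ p),
                ← ENNReal.rpow_mul, ← ENNReal.rpow_mul, one_div, inv_mul_cancel₀ hp0,
                ENNReal.rpow_one]
              congr 2
              rw [one_div]; field_simp
      -- simplify the weight term
      have h3 : (ENNReal.ofReal (r ^ (1 - q) / (q - 1))) ^ (p / q) * ENNReal.ofReal r
          = c := by
        have hpos : (0:ℝ) < r ^ (1 - q) / (q - 1) := by positivity
        rw [ENNReal.ofReal_rpow_of_pos hpos]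
        rw [Real.div_rpow (Real.rpow_nonneg hr0.le _) hqne.le,
          ← Real.rpow_mul hr0.le, hexp, div_eq_mul_inv, ← Real.rpow_neg hqne.le,
          ENNReal.ofReal_mul (by positivity), hcdef]
        rw [mul_comm (ENNReal.ofReal (r ^ (-1:ℝ))) _, mul_assoc,
          ← ENNReal.ofReal_mul (by positivity), Real.rpow_neg_one,
          inv_mul_cancel₀ hr0.ne', ENNReal.ofReal_one, mul_one]
      calc (∫⁻ s in Ioi r, F s * (ENNReal.ofReal s)⁻¹) ^ p * ENNReal.ofReal r
          ≤ (X * (ENNReal.ofReal (r ^ (1 - q) / (q - 1))) ^ (p / q)) * ENNReal.ofReal r :=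
            mul_le_mul_left h2 _
        _ = X * ((ENNReal.ofReal (r ^ (1 - q) / (q - 1))) ^ (p / q) * ENNReal.ofReal r) := by
            ring
        _ = c * X := by rw [h3, mul_comm]
    have hmeasX : Measurable fun r => ∫⁻ s in Ioi r, F s ^ p :=
      Antitone.measurable fun a b hab =>
        lintegral_mono' (Measure.restrict_mono (Ioi_subset_Ioi hab) le_rfl) le_rfl
    calc ∫⁻ r in Ioi (0:ℝ), (∫⁻ s in Ioi r, F s * (ENNReal.ofReal s)⁻¹) ^ p * ENNReal.ofReal r
        ≤ ∫⁻ r in Ioi (0:ℝ), c * ∫⁻ s in Ioi r, F s ^ p :=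
          setLIntegral_mono (measurable_const.mul hmeasX) key
      _ = ∫⁻ s in Ioi (0:ℝ), F s ^ p * ∫⁻ _ in Ioo 0 s, c :=
          tonelli_tri _ _ measurable_const (hF.pow_const _)
      _ = ∫⁻ s in Ioi (0:ℝ), c * (F s ^ p * ENNReal.ofReal s) := by
          refine setLIntegral_congr_fun measurableSet_Ioi (fun s hs => ?_)
          rw [setLIntegral_const, Real.volume_Ioo, sub_zero]
          ring
      _ = c * ∫⁻ s in Ioi (0:ℝ), F s ^ p * ENNReal.ofReal s :=
          lintegral_const_mul' _ _ ENNReal.ofReal_ne_top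

lemma lintegral_rdr (g : ℝ → ℝ≥0∞) :
    ∫⁻ x, g x ∂rdr = ∫⁻ x in Ioi (0:ℝ), ENNReal.ofReal x * g x := by
  rw [rdr, lintegral_withDensity_eq_lintegral_mul_non_measurable _
    ENNReal.measurable_ofReal]
  · rfl
  · exact ae_of_all _ fun x => ENNReal.ofReal_lt_top

/-- With `A_0(r) = (1/2)∫_r^∞ ρ(s)(∫_0^s ρ(u) u du) ds/s` for nonnegative `ρ`, for
`1 ≤ p < ∞` one has `‖A_0‖_{L^p(ℝ²)} ≤ C_p ‖ρ‖_{L¹(ℝ²)} ‖ρ‖_{L^p(ℝ²)}`. -/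
theorem Azero_Lp_bound (p : ℝ≥0∞) (hp1 : 1 ≤ p) (hp2 : p ≠ ⊤) :
    ∃ C : ℝ≥0∞, C ≠ ⊤ ∧ ∀ ρ : ℝ → ℝ, Measurable ρ → (∀ s, 0 ≤ ρ s) →
      eLpNorm (fun r => (1/2 : ℝ) * ∫ s in Ioi r, ρ s * (∫ u in Ioc (0:ℝ) s, ρ u * u) / s) p rdr
        ≤ C * eLpNorm ρ 1 rdr * eLpNorm ρ p rdr := by
  have hp0 : p ≠ 0 := by intro h; rw [h] at hp1; exact (not_le.2 zero_lt_one) hp1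
  have hp'1 : 1 ≤ p.toReal := by
    have := ENNReal.toReal_mono hp2 hp1
    simpa using this
  have hp'0 : p.toReal ≠ 0 := by positivity
  obtain ⟨CH, hCHtop, hCH⟩ := hardy' hp'1
  set C : ℝ≥0∞ := ENNReal.ofReal (1/2) * (CH + 1) ^ (1 / p.toReal) with hCdef
  have hCH1 : CH + 1 ≠ ⊤ := by
    simp [ENNReal.add_ne_top, hCHtop]
  have hCtop : C ≠ ⊤ :=
    ENNReal.mul_ne_top ENNReal.ofReal_ne_top
      (ENNReal.rpow_ne_top_of_nonneg (by positivity) hCH1)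
  have hC0 : C ≠ 0 := by
    rw [hCdef]
    apply mul_ne_zero
    · simp
    · exact (ENNReal.rpow_pos (by simp) hCH1).ne'
  refine ⟨C, hCtop, fun ρ hρm hρ => ?_⟩
  set F : ℝ → ℝ≥0∞ := fun s => ENNReal.ofReal (ρ s) with hFdef
  have hFm : Measurable F := ENNReal.measurable_ofReal.comp hρm
  set N1 : ℝ≥0∞ := eLpNorm ρ 1 rdr with hN1def
  set Np : ℝ≥0∞ := eLpNorm ρ p rdr with hNpdef
  -- formulas for the norms
  have hN1 : N1 = ∫⁻ s in Ioi (0:ℝ), F s * ENNReal.ofReal s := by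
    rw [hN1def, eLpNorm_one_eq_lintegral_enorm, lintegral_rdr]
    refine setLIntegral_congr_fun measurableSet_Ioi (fun s _ => ?_)
    rw [Real.enorm_eq_ofReal (hρ s), mul_comm]
  have hNp : Np ^ p.toReal = ∫⁻ s in Ioi (0:ℝ), F s ^ p.toReal * ENNReal.ofReal s := by
    rw [hNpdef, eLpNorm_eq_lintegral_rpow_enorm_toReal hp0 hp2, one_div,
      ← ENNReal.rpow_mul, inv_mul_cancel₀ hp'0, ENNReal.rpow_one, lintegral_rdr]
    refine setLIntegral_congr_fun measurableSet_Ioi (fun s _ => ?_)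
    rw [Real.enorm_eq_ofReal (hρ s), mul_comm]
  -- the function whose norm we bound
  set L : ℝ → ℝ := fun r =>
    (1/2 : ℝ) * ∫ s in Ioi r, ρ s * (∫ u in Ioc (0:ℝ) s, ρ u * u) / s with hLdef
  -- nonnegativity of the integrand
  have hinner_nonneg : ∀ s : ℝ, 0 ≤ ∫ u in Ioc (0:ℝ) s, ρ u * u := fun s =>
    setIntegral_nonneg measurableSet_Ioc fun u hu => mul_nonneg (hρ u) hu.1.le
  have hg : ∀ s : ℝ, 0 ≤ ρ s * (∫ u in Ioc (0:ℝ) s, ρ u * u) / s := by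
    intro s
    rcases lt_trichotomy s 0 with h | h | h
    · have he : Ioc (0:ℝ) s = ∅ := Set.Ioc_eq_empty (by intro hc; linarith)
      rw [he]
      simp
    · rw [h, div_zero]
    · exact div_nonneg (mul_nonneg (hρ s) (hinner_nonneg s)) h.le
  have hLnonneg : ∀ r, 0 ≤ L r := fun r =>
    mul_nonneg (by norm_num) (setIntegral_nonneg measurableSet_Ioi fun s _ => hg s)
  -- the kernel-zero implication
  have hnull : ρ =ᵐ[rdr] 0 → eLpNorm L p rdr = 0 := by
    intro hae
    set N : Set ℝ := {s | ρ s ≠ 0} with hNdef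
    have hN : MeasurableSet N := (hρm (measurableSet_singleton 0)).compl
    have h0 : rdr N = 0 := by
      rw [Filter.EventuallyEq, ae_iff] at hae
      simpa using hae
    have h1 : volume (N ∩ Ioi 0) = 0 := by
      rw [rdr, withDensity_apply _ hN, Measure.restrict_restrict hN] at h0
      have h2 := (lintegral_eq_zero_iff ENNReal.measurable_ofReal).mp h0
      have h3 : ∀ᵐ x ∂(volume.restrict (N ∩ Ioi 0)), x ∈ N ∩ Ioi 0 :=
        ae_restrict_mem (hN.inter measurableSet_Ioi)
      have h4 : ∀ᵐ (_x : ℝ) ∂(volume.restrict (N ∩ Ioi 0)), False := by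
        filter_upwards [h2, h3] with x hx2 hx3
        have : (0:ℝ) < x := hx3.2
        simp only [Pi.zero_apply, ENNReal.ofReal_eq_zero] at hx2
        linarith
      have h5 : volume.restrict (N ∩ Ioi 0) univ = 0 := by
        rw [ae_iff] at h4
        simpa using h4
      rwa [Measure.restrict_apply_univ] at h5
    have hinner0 : ∀ s : ℝ, ∫ u in Ioc (0:ℝ) s, ρ u * u = 0 := by
      intro s
      apply integral_eq_zero_of_ae
      rw [Filter.EventuallyEq, ae_iff]
      rw [Measure.restrict_apply' measurableSet_Ioc]
      refine measure_mono_null (fun u hu => ?_) h1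
      obtain ⟨hu1, hu2⟩ := hu
      simp only [Pi.zero_apply, mem_setOf_eq] at hu1
      have : ρ u ≠ 0 := fun hc => hu1 (by rw [hc, zero_mul])
      exact ⟨this, hu2.1⟩
    have hL0 : L = fun _ => (0:ℝ) := by
      funext r
      rw [hLdef]
      simp only [hinner0, mul_zero, zero_div, integral_zero, mul_zero]
    rw [hL0]
    exact eLpNorm_zero'
  by_cases hNp0 : Np = 0
  · have : ρ =ᵐ[rdr] 0 :=
      (eLpNorm_eq_zero_iff hρm.aestronglyMeasurable hp0).mp hNp0
    rw [hnull this]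
    exact zero_le
  by_cases hN10 : N1 = 0
  · have : ρ =ᵐ[rdr] 0 :=
      (eLpNorm_eq_zero_iff hρm.aestronglyMeasurable one_ne_zero).mp hN10
    rw [hnull this]
    exact zero_le
  by_cases hN1top : N1 = ⊤
  · rw [hN1top]
    rw [ENNReal.mul_top hC0, ENNReal.top_mul hNp0]
    exact le_top
  by_cases hNptop : Np = ⊤
  · rw [hNptop, ENNReal.mul_top (mul_ne_zero hC0 hN10)]
    exact le_top
  -- main case
  set T : ℝ → ℝ≥0∞ := fun r => ∫⁻ s in Ioi r, F s * (ENNReal.ofReal s)⁻¹ with hTdef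
  have hTmeas : Measurable T :=
    Antitone.measurable fun a b hab =>
      lintegral_mono' (Measure.restrict_mono (Ioi_subset_Ioi hab) le_rfl) le_rfl
  set c : ℝ≥0∞ := ENNReal.ofReal (1/2) * N1 with hcdef
  have hctop : c ≠ ⊤ := ENNReal.mul_ne_top ENNReal.ofReal_ne_top hN1top
  -- the inner integral is bounded by N1
  have hinner : ∀ s : ℝ, ENNReal.ofReal (∫ u in Ioc (0:ℝ) s, ρ u * u) ≤ N1 := by
    intro s
    calc ENNReal.ofReal (∫ u in Ioc (0:ℝ) s, ρ u * u)
        ≤ ∫⁻ u in Ioc (0:ℝ) s, ENNReal.ofReal (ρ u * u) := by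
          refine ofReal_int_le _ _ ?_
          filter_upwards [ae_restrict_mem measurableSet_Ioc] with u hu
          exact mul_nonneg (hρ u) hu.1.le
      _ = ∫⁻ u in Ioc (0:ℝ) s, F u * ENNReal.ofReal u := by
          refine lintegral_congr fun u => ?_
          rw [ENNReal.ofReal_mul (hρ u)]
      _ ≤ ∫⁻ u in Ioi (0:ℝ), F u * ENNReal.ofReal u :=
          lintegral_mono' (Measure.restrict_mono Ioc_subset_Ioi_self le_rfl) le_rfl
      _ = N1 := hN1.symm
  -- pointwise bound for the outer function
  have hpt : ∀ r ∈ Ioi (0:ℝ), ENNReal.ofReal (L r) ≤ c * T r := by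
    intro r hr
    have hr0 : (0:ℝ) < r := hr
    rw [hLdef]
    simp only
    rw [ENNReal.ofReal_mul (by norm_num : (0:ℝ) ≤ 1/2), hcdef, mul_assoc]
    refine mul_le_mul_right ?_ _
    calc ENNReal.ofReal (∫ s in Ioi r, ρ s * (∫ u in Ioc (0:ℝ) s, ρ u * u) / s)
        ≤ ∫⁻ s in Ioi r, ENNReal.ofReal (ρ s * (∫ u in Ioc (0:ℝ) s, ρ u * u) / s) :=
          ofReal_int_le _ _ (ae_of_all _ fun s => hg s)
      _ ≤ ∫⁻ s in Ioi r, N1 * (F s * (ENNReal.ofReal s)⁻¹) := by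
          refine setLIntegral_mono (measurable_const.mul
            (hFm.mul ENNReal.measurable_ofReal.inv)) fun s hs => ?_
          have hs0 : (0:ℝ) < s := hr0.trans hs
          rw [div_eq_mul_inv, ENNReal.ofReal_mul (mul_nonneg (hρ s) (hinner_nonneg s)),
            ENNReal.ofReal_mul (hρ s), ENNReal.ofReal_inv_of_pos hs0]
          calc F s * ENNReal.ofReal (∫ u in Ioc (0:ℝ) s, ρ u * u) * (ENNReal.ofReal s)⁻¹
              ≤ F s * N1 * (ENNReal.ofReal s)⁻¹ := by
                exact mul_le_mul_left (mul_le_mul_right (hinner s) _) _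
            _ = N1 * (F s * (ENNReal.ofReal s)⁻¹) := by ring
      _ = N1 * T r := lintegral_const_mul' _ _ hN1top
  -- eLpNorm of L as a weighted lintegral
  have hL : eLpNorm L p rdr
      = (∫⁻ r in Ioi (0:ℝ), ENNReal.ofReal (L r) ^ p.toReal * ENNReal.ofReal r)
          ^ (1 / p.toReal) := by
    rw [eLpNorm_eq_lintegral_rpow_enorm_toReal hp0 hp2, lintegral_rdr]
    congr 1
    refine setLIntegral_congr_fun measurableSet_Ioi (fun r _ => ?_)
    rw [Real.enorm_eq_ofReal (hLnonneg r), mul_comm]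
  have hbound : ∫⁻ r in Ioi (0:ℝ), ENNReal.ofReal (L r) ^ p.toReal * ENNReal.ofReal r
      ≤ c ^ p.toReal * ((CH + 1) * Np ^ p.toReal) := by
    calc ∫⁻ r in Ioi (0:ℝ), ENNReal.ofReal (L r) ^ p.toReal * ENNReal.ofReal r
        ≤ ∫⁻ r in Ioi (0:ℝ), (c * T r) ^ p.toReal * ENNReal.ofReal r := by
          refine setLIntegral_mono (((measurable_const.mul hTmeas).pow_const _).mul
            ENNReal.measurable_ofReal) fun r hr => ?_
          exact mul_le_mul_left (ENNReal.rpow_le_rpow (hpt r hr) (by positivity)) _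
      _ = ∫⁻ r in Ioi (0:ℝ), c ^ p.toReal * (T r ^ p.toReal * ENNReal.ofReal r) := by
          refine lintegral_congr fun r => ?_
          rw [ENNReal.mul_rpow_of_nonneg _ _ (by positivity : (0:ℝ) ≤ p.toReal)]
          ring
      _ = c ^ p.toReal * ∫⁻ r in Ioi (0:ℝ), T r ^ p.toReal * ENNReal.ofReal r :=
          lintegral_const_mul' _ _ (ENNReal.rpow_ne_top_of_nonneg (by positivity) hctop)
      _ ≤ c ^ p.toReal * (CH * ∫⁻ s in Ioi (0:ℝ), F s ^ p.toReal * ENNReal.ofReal s) :=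
          mul_le_mul_right (hCH F hFm) _
      _ = c ^ p.toReal * (CH * Np ^ p.toReal) := by rw [hNp]
      _ ≤ c ^ p.toReal * ((CH + 1) * Np ^ p.toReal) :=
          mul_le_mul_right (mul_le_mul_left le_self_add _) _
  calc eLpNorm L p rdr
      ≤ (c ^ p.toReal * ((CH + 1) * Np ^ p.toReal)) ^ (1 / p.toReal) := by
        rw [hL]
        exact ENNReal.rpow_le_rpow hbound (by positivity)
    _ = c * ((CH + 1) ^ (1 / p.toReal) * Np) := by
        rw [ENNReal.mul_rpow_of_nonneg _ _ (by positivity : (0:ℝ) ≤ 1 / p.toReal),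
          ENNReal.mul_rpow_of_nonneg _ _ (by positivity : (0:ℝ) ≤ 1 / p.toReal),
          ← ENNReal.rpow_mul, ← ENNReal.rpow_mul, mul_one_div_cancel hp'0,
          ENNReal.rpow_one, ENNReal.rpow_one]
    _ = C * N1 * Np := by rw [hcdef, hCdef]; ring
end

section
/- With A_0(r) = (1/2)∫_r^∞ ρ(s)(∫_0^s ρ(u) u du) ds/s, there is a universal constant C such that ‖A_0‖_{L^∞} ≤ C ‖ρ‖_{L^2(ℝ²)}², where the norm is the L² norm of the radial function ρ on ℝ². -/
open MeasureTheory Set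
open scoped ENNReal NNReal

lemma norm_sq_eq (ρ : ℝ → ℝ) (hm : Measurable ρ) (hnn : ∀ s, 0 ≤ ρ s) :
    (eLpNorm ρ 2 rdr)^2 = ∫⁻ u in Ioi (0:ℝ), ENNReal.ofReal (ρ u^2 * u) := by
  rw [eLpNorm_eq_lintegral_rpow_enorm_toReal (by norm_num) (by norm_num)]
  rw [← ENNReal.rpow_natCast _ 2, ← ENNReal.rpow_mul]
  norm_num
  rw [rdr, lintegral_withDensity_eq_lintegral_mul _ ENNReal.measurable_ofReal
    (by fun_prop)]
  refine setLIntegral_congr_fun measurableSet_Ioi (fun u hu => ?_)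
  simp only [Pi.mul_apply]
  rw [Real.enorm_eq_ofReal (hnn u), ← ENNReal.ofReal_pow (hnn u),
    ← ENNReal.ofReal_mul (le_of_lt hu), mul_comm]




lemma swap_eq (ρ : ℝ → ℝ) (hm : Measurable ρ) :
    ∫⁻ s in Ioi (0:ℝ), ∫⁻ u in Ioc (0:ℝ) s, ENNReal.ofReal ((ρ u * u / s)^2)
      = ∫⁻ u in Ioi (0:ℝ), ENNReal.ofReal (ρ u^2 * u) := by
  set F : ℝ → ℝ → ℝ≥0∞ := fun s u =>
    {q : ℝ × ℝ | q.2 ∈ Ioc 0 q.1}.indicator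
      (fun q => ENNReal.ofReal ((ρ q.2 * q.2 / q.1)^2)) (s, u) with hF
  have hFmeas : Measurable (Function.uncurry F) := by
    apply Measurable.indicator
    · fun_prop
    · exact (measurableSet_lt measurable_const measurable_snd).inter
        (measurableSet_le measurable_snd measurable_fst)
  have hFval : ∀ s u : ℝ, F s u =
      (Ioc (0:ℝ) s).indicator (fun u => ENNReal.ofReal ((ρ u * u / s)^2)) u := by
    intro s u
    simp only [hF, Set.indicator, mem_setOf_eq, mem_Ioc]
  calc ∫⁻ s in Ioi (0:ℝ), ∫⁻ u in Ioc (0:ℝ) s, ENNReal.ofReal ((ρ u * u / s)^2)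
      = ∫⁻ s in Ioi (0:ℝ), ∫⁻ u in Ioi (0:ℝ), F s u := by
        refine lintegral_congr fun s => ?_
        simp_rw [hFval s]
        rw [lintegral_indicator measurableSet_Ioc, Measure.restrict_restrict measurableSet_Ioc,
          inter_eq_left.2 Ioc_subset_Ioi_self]
    _ = ∫⁻ u in Ioi (0:ℝ), ∫⁻ s in Ioi (0:ℝ), F s u :=
        lintegral_lintegral_swap hFmeas.aemeasurable
    _ = ∫⁻ u in Ioi (0:ℝ), ENNReal.ofReal (ρ u^2 * u) := by
        refine setLIntegral_congr_fun measurableSet_Ioi (fun u hu => ?_)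
        have hu0 : (0:ℝ) < u := hu
        have hFu : ∀ s : ℝ, F s u =
            (Ici u).indicator (fun s => ENNReal.ofReal ((ρ u * u / s)^2)) s := by
          intro s
          simp only [hF, Set.indicator, mem_setOf_eq, mem_Ioc, mem_Ici]
          congr 1
          simp [hu0]
        simp_rw [hFu]
        rw [lintegral_indicator measurableSet_Ici, Measure.restrict_restrict measurableSet_Ici,
          inter_eq_left.2 (Ici_subset_Ioi.2 hu0)]
        have hcong : ∫⁻ s in Ici u, ENNReal.ofReal ((ρ u * u / s)^2)
            = ∫⁻ s in Ici u, ENNReal.ofReal ((ρ u * u)^2) * ENNReal.ofReal ((s^2)⁻¹) := by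
          refine setLIntegral_congr_fun measurableSet_Ici (fun s hs => ?_)
          rw [← ENNReal.ofReal_mul (sq_nonneg _)]
          congr 1
          rw [div_pow]
          ring
        rw [hcong, lintegral_const_mul' _ _ ENNReal.ofReal_ne_top]
        have hJ : ∫⁻ s in Ici u, ENNReal.ofReal ((s^2)⁻¹) = ENNReal.ofReal u⁻¹ := by
          rw [← restrict_Ioi_eq_restrict_Ici]
          have hint : IntegrableOn (fun s : ℝ => (s^2)⁻¹) (Ioi u) volume := by
            refine (integrableOn_Ioi_rpow_of_lt (by norm_num : (-2:ℝ) < -1) hu0).congr_fun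
              (fun s hs => ?_) measurableSet_Ioi
            dsimp only
            rw [Real.rpow_neg (le_of_lt (hu0.trans hs)), ← Real.rpow_natCast s 2]
            norm_num
          rw [← ofReal_integral_eq_lintegral_ofReal hint
            (ae_restrict_of_forall_mem measurableSet_Ioi fun s hs => by positivity)]
          congr 1
          have : ∫ s in Ioi u, (s^2)⁻¹ = ∫ s in Ioi u, s ^ (-2:ℝ) := by
            refine setIntegral_congr_fun measurableSet_Ioi fun s hs => ?_
            rw [Real.rpow_neg (le_of_lt (hu0.trans hs)), ← Real.rpow_natCast s 2]
            norm_num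
          rw [this, integral_Ioi_rpow_of_lt (by norm_num) hu0]
          rw [show (-2:ℝ) + 1 = -1 by norm_num, Real.rpow_neg_one]
          field_simp
        rw [hJ, ← ENNReal.ofReal_mul (sq_nonneg _)]
        congr 1
        field_simp

theorem main_test (ρ : ℝ → ℝ) (hm : Measurable ρ) (hnn : ∀ s, 0 ≤ ρ s) (r : ℝ) (hr : 0 < r) :
    ENNReal.ofReal |(1/2 : ℝ) * ∫ s in Ioi r, ρ s * (∫ u in Ioc (0:ℝ) s, ρ u * u) / s|
      ≤ ∫⁻ u in Ioi (0:ℝ), ENNReal.ofReal (ρ u^2 * u) := by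
  set N2 := ∫⁻ u in Ioi (0:ℝ), ENNReal.ofReal (ρ u^2 * u) with hN2
  set g : ℝ → ℝ := fun s => ∫ u in Ioc (0:ℝ) s, ρ u * u with hg
  have hgnn : ∀ s, 0 ≤ g s := fun s =>
    setIntegral_nonneg measurableSet_Ioc fun u hu => mul_nonneg (hnn u) hu.1.le
  have half_nn : (0:ℝ) ≤ 1/2 := by norm_num
  -- Step A: pull out the 1/2
  rw [abs_mul, abs_of_nonneg half_nn, ENNReal.ofReal_mul half_nn]
  -- Step B: ofReal |∫| ≤ ∫⁻ ofReal |·|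
  have stepB : ENNReal.ofReal |∫ s in Ioi r, ρ s * g s / s|
      ≤ ∫⁻ s in Ioi r, ENNReal.ofReal |ρ s * g s / s| := by
    have := enorm_integral_le_lintegral_enorm (μ := volume.restrict (Ioi r))
      (fun s => ρ s * g s / s)
    simpa only [Real.enorm_eq_ofReal_abs] using this
  -- define Φ
  set Φ : ℝ → ℝ≥0∞ := fun s => ENNReal.ofReal (1/2) *
    ((∫⁻ u in Ioc (0:ℝ) s, ENNReal.ofReal ((ρ u * u / s)^2))
      + ENNReal.ofReal (ρ s^2) * ENNReal.ofReal s) with hΦ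
  -- Step C: pointwise domination on Ioi r
  have stepC : ∀ s : ℝ, 0 < s → ENNReal.ofReal |ρ s * g s / s| ≤ Φ s := by
    intro s hs
    have hsne : ENNReal.ofReal s ≠ 0 := by
      simp [ENNReal.ofReal_eq_zero, not_le, hs]
    rw [abs_of_nonneg (div_nonneg (mul_nonneg (hnn s) (hgnn s)) hs.le)]
    have h1 : ENNReal.ofReal (ρ s * g s / s)
        = ENNReal.ofReal (ρ s) * ENNReal.ofReal (g s) / ENNReal.ofReal s := by
      rw [ENNReal.ofReal_div_of_pos hs, ENNReal.ofReal_mul (hnn s)]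
    have h2 : ENNReal.ofReal (g s) ≤ ∫⁻ u in Ioc (0:ℝ) s, ENNReal.ofReal (ρ u * u) := by
      by_cases hint : IntegrableOn (fun u => ρ u * u) (Ioc (0:ℝ) s) volume
      · simp only [hg]
        rw [ofReal_integral_eq_lintegral_ofReal hint
          (ae_restrict_of_forall_mem measurableSet_Ioc fun u hu => mul_nonneg (hnn u) hu.1.le)]
      · simp only [hg]
        rw [integral_undef hint]; simp
    have h3 : ENNReal.ofReal (ρ s) * ENNReal.ofReal (g s) / ENNReal.ofReal s
        ≤ ENNReal.ofReal (ρ s) * (∫⁻ u in Ioc (0:ℝ) s, ENNReal.ofReal (ρ u * u))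
            / ENNReal.ofReal s :=
      ENNReal.div_le_div_right (mul_le_mul_right h2 _) _
    have h4 : ENNReal.ofReal (ρ s) * (∫⁻ u in Ioc (0:ℝ) s, ENNReal.ofReal (ρ u * u))
            / ENNReal.ofReal s
        = ∫⁻ u in Ioc (0:ℝ) s,
            ENNReal.ofReal (ρ s) * (ENNReal.ofReal s)⁻¹ * ENNReal.ofReal (ρ u * u) := by
      rw [lintegral_const_mul' _ _
        (ENNReal.mul_ne_top ENNReal.ofReal_ne_top (ENNReal.inv_ne_top.2 hsne))]
      rw [div_eq_mul_inv, mul_right_comm]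
    have h5 : ∀ u ∈ Ioc (0:ℝ) s,
        ENNReal.ofReal (ρ s) * (ENNReal.ofReal s)⁻¹ * ENNReal.ofReal (ρ u * u)
          ≤ ENNReal.ofReal ((1/2) * ((ρ u * u / s)^2 + ρ s^2)) := by
      intro u hu
      have huu : 0 ≤ ρ u * u := mul_nonneg (hnn u) hu.1.le
      have : ENNReal.ofReal (ρ s) * (ENNReal.ofReal s)⁻¹ * ENNReal.ofReal (ρ u * u)
          = ENNReal.ofReal (ρ s / s * (ρ u * u)) := by
        rw [ENNReal.ofReal_mul (div_nonneg (hnn s) hs.le), ENNReal.ofReal_div_of_pos hs,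
          div_eq_mul_inv]
      rw [this]
      apply ENNReal.ofReal_le_ofReal
      have key : ρ u * u / s * ρ s ≤ (1/2) * ((ρ u * u / s)^2 + ρ s^2) := by
        nlinarith [sq_nonneg (ρ u * u / s - ρ s)]
      calc ρ s / s * (ρ u * u) = ρ u * u / s * ρ s := by ring
        _ ≤ _ := key
    have h6 : ∫⁻ u in Ioc (0:ℝ) s, ENNReal.ofReal ((1/2) * ((ρ u * u / s)^2 + ρ s^2)) = Φ s := by
      have hptw : ∀ u : ℝ, ENNReal.ofReal ((1/2) * ((ρ u * u / s)^2 + ρ s^2))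
          = ENNReal.ofReal (1/2) * (ENNReal.ofReal ((ρ u * u / s)^2) + ENNReal.ofReal (ρ s^2)) := by
        intro u
        rw [ENNReal.ofReal_mul half_nn, ENNReal.ofReal_add (sq_nonneg _) (sq_nonneg _)]
      simp_rw [hptw]
      rw [lintegral_const_mul' _ _ ENNReal.ofReal_ne_top,
        lintegral_add_right _ measurable_const, setLIntegral_const,
        Real.volume_Ioc, sub_zero, hΦ]
    calc ENNReal.ofReal (ρ s * g s / s) = _ := h1
      _ ≤ _ := h3
      _ = _ := h4
      _ ≤ ∫⁻ u in Ioc (0:ℝ) s, ENNReal.ofReal ((1/2) * ((ρ u * u / s)^2 + ρ s^2)) :=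
          setLIntegral_mono (by fun_prop) h5
      _ = Φ s := h6
  -- put everything together
  have stepD : ∫⁻ s in Ioi r, ENNReal.ofReal |ρ s * g s / s| ≤ ∫⁻ s in Ioi (0:ℝ), Φ s := by
    calc ∫⁻ s in Ioi r, ENNReal.ofReal |ρ s * g s / s| ≤ ∫⁻ s in Ioi r, Φ s :=
          setLIntegral_mono' measurableSet_Ioi fun s hs => stepC s (hr.trans hs)
      _ ≤ ∫⁻ s in Ioi (0:ℝ), Φ s :=
          lintegral_mono' (Measure.restrict_mono (Ioi_subset_Ioi hr.le) le_rfl) le_rfl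
  have stepE : ∫⁻ s in Ioi (0:ℝ), Φ s = ENNReal.ofReal (1/2) * (N2 + N2) := by
    rw [hΦ]
    rw [lintegral_const_mul' _ _ ENNReal.ofReal_ne_top,
      lintegral_add_right _ (by fun_prop)]
    congr 1
    congr 1
    · exact swap_eq ρ hm
    · refine setLIntegral_congr_fun measurableSet_Ioi (fun s hs => ?_)
      rw [← ENNReal.ofReal_mul (sq_nonneg _)]
  have hfin : ENNReal.ofReal (1/2) * (ENNReal.ofReal (1/2) * (N2 + N2)) ≤ N2 := by
    have h12 : ENNReal.ofReal (1/2) * 2 = 1 := by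
      rw [show (2:ℝ≥0∞) = ENNReal.ofReal 2 by simp, ← ENNReal.ofReal_mul half_nn]
      norm_num
    calc ENNReal.ofReal (1/2) * (ENNReal.ofReal (1/2) * (N2 + N2))
        ≤ 1 * (ENNReal.ofReal (1/2) * (N2 + N2)) := by
          gcongr
          exact ENNReal.ofReal_le_one.2 (by norm_num)
      _ = ENNReal.ofReal (1/2) * (N2 + N2) := one_mul _
      _ = (ENNReal.ofReal (1/2) * 2) * N2 := by rw [← two_mul, mul_assoc]
      _ = N2 := by rw [h12, one_mul]
  calc ENNReal.ofReal (1/2) * ENNReal.ofReal |∫ s in Ioi r, ρ s * g s / s|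
      ≤ ENNReal.ofReal (1/2) * (∫⁻ s in Ioi (0:ℝ), Φ s) :=
        mul_le_mul_right (stepB.trans stepD) _
    _ = ENNReal.ofReal (1/2) * (ENNReal.ofReal (1/2) * (N2 + N2)) := by rw [stepE]
    _ ≤ N2 := hfin

/-- With `A_0(r) = (1/2)∫_r^∞ ρ(s)(∫_0^s ρ(u) u du) ds/s` for nonnegative `ρ`, there is a
universal constant `C` with `‖A_0‖_{L^∞} ≤ C ‖ρ‖_{L²(ℝ²)}²`. -/
theorem Azero_Linfty_bound :
    ∃ C : ℝ≥0∞, C ≠ ⊤ ∧ ∀ ρ : ℝ → ℝ, Measurable ρ → (∀ s, 0 ≤ ρ s) → ∀ r : ℝ, 0 < r →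
      ENNReal.ofReal |(1/2 : ℝ) * ∫ s in Ioi r, ρ s * (∫ u in Ioc (0:ℝ) s, ρ u * u) / s|
        ≤ C * (eLpNorm ρ 2 rdr)^2 := by
  refine ⟨1, ENNReal.one_ne_top, fun ρ hm hnn r hr => ?_⟩
  rw [one_mul, norm_sq_eq ρ hm hnn]
  exact main_test ρ hm hnn r hr
end

section
/- With A_θ(r) = -(1/2)∫_0^r ρ(s) s ds, for 1 < p ≤ ∞ there is a constant C_p such that ‖A_θ(r)²/r²‖_{L^p(ℝ²)} ≤ C_p ‖ρ‖_{L^1(ℝ²)} ‖ρ‖_{L^p(ℝ²)}, and moreover ‖A_θ(r)²/r²‖_{L^∞} ≤ C ‖ρ‖_{L^2(ℝ²)}² for a universal constant C. -/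
open MeasureTheory Set
open scoped ENNReal NNReal

namespace AthetaAux

lemma rdr_restrict {s : Set ℝ} (hs : MeasurableSet s) (hsub : s ⊆ Ioi 0) :
    rdr.restrict s = (volume.restrict s).withDensity (fun r => ENNReal.ofReal r) := by
  rw [rdr, restrict_withDensity hs, Measure.restrict_restrict hs, inter_eq_left.2 hsub]

lemma rdr_restrict_Ioi : rdr.restrict (Ioi 0) = rdr := by
  rw [rdr, restrict_withDensity measurableSet_Ioi,
    Measure.restrict_restrict measurableSet_Ioi, inter_self]

lemma lintegral_rdr_restrict {h : ℝ → ℝ≥0∞} (hm : Measurable h) {s : Set ℝ}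
    (hs : MeasurableSet s) (hsub : s ⊆ Ioi 0) :
    ∫⁻ r in s, h r ∂rdr = ∫⁻ r in s, ENNReal.ofReal r * h r ∂volume := by
  rw [rdr_restrict hs hsub,
    lintegral_withDensity_eq_lintegral_mul _ ENNReal.measurable_ofReal hm]
  rfl

lemma rdr_ae_pos : ∀ᵐ r ∂rdr, 0 < r := by
  rw [ae_iff]
  have h1 : {r : ℝ | ¬ 0 < r} = Iic 0 := by ext x; simp [not_lt]
  rw [h1, rdr, withDensity_apply _ measurableSet_Iic,
    Measure.restrict_restrict measurableSet_Iic]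
  have h2 : Iic (0:ℝ) ∩ Ioi 0 = ∅ := by
    ext x; simp only [mem_inter_iff, mem_Iic, mem_Ioi, mem_empty_iff_false, iff_false]
    rintro ⟨h1', h2'⟩; linarith
  rw [h2]; simp

lemma rdr_Ioc {r : ℝ} (hr : 0 ≤ r) : rdr (Ioc 0 r) = ENNReal.ofReal (r^2/2) := by
  rw [rdr, withDensity_apply _ measurableSet_Ioc,
    Measure.restrict_restrict measurableSet_Ioc, inter_eq_left.2 (fun x hx => hx.1)]
  rw [← ofReal_integral_eq_lintegral_ofReal]
  · congr 1
    rw [← intervalIntegral.integral_of_le hr]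
    simpa using intervalIntegral.integral_id (a := 0) (b := r)
  · exact (intervalIntegrable_iff_integrableOn_Ioc_of_le hr).1 intervalIntegral.intervalIntegrable_id
  · exact ae_restrict_of_forall_mem measurableSet_Ioc fun x hx => hx.1.le

variable {ρ : ℝ → ℝ}

noncomputable def J (ρ : ℝ → ℝ) (r : ℝ) : ℝ≥0∞ :=
  ∫⁻ s in Ioc 0 r, ENNReal.ofReal (ρ s) ∂rdr

lemma ofReal_integral_le (hρ : Measurable ρ) (h0 : ∀ s, 0 ≤ ρ s) (r : ℝ) :
    ENNReal.ofReal (∫ s in Ioc (0:ℝ) r, ρ s * s) ≤ J ρ r := by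
  by_cases hint : IntegrableOn (fun s => ρ s * s) (Ioc 0 r) volume
  · rw [ofReal_integral_eq_lintegral_ofReal hint
      (ae_restrict_of_forall_mem measurableSet_Ioc fun x hx => mul_nonneg (h0 x) hx.1.le)]
    rw [J, lintegral_rdr_restrict hρ.ennreal_ofReal measurableSet_Ioc (fun x hx => hx.1)]
    refine le_of_eq (setLIntegral_congr_fun measurableSet_Ioc (fun x _ => ?_))
    rw [ENNReal.ofReal_mul (h0 x), mul_comm]
  · rw [integral_undef hint]; simp

lemma J_le_eLpNorm_one (h0 : ∀ s, 0 ≤ ρ s) (r : ℝ) : J ρ r ≤ eLpNorm ρ 1 rdr := by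
  rw [eLpNorm_one_eq_lintegral_enorm]
  refine (setLIntegral_le_lintegral _ _).trans (le_of_eq (lintegral_congr fun x => ?_))
  rw [Real.enorm_eq_ofReal (h0 x)]

lemma J_holder (hρ : Measurable ρ) {t t' : ℝ} (hpq : t.HolderConjugate t') (r : ℝ) :
    J ρ r ≤ (∫⁻ s, ENNReal.ofReal (ρ s) ^ t ∂rdr) ^ (1/t) * (rdr (Ioc 0 r)) ^ (1/t') := by
  set g : ℝ → ℝ≥0∞ := fun s => ENNReal.ofReal (ρ s) with hg
  set ind : ℝ → ℝ≥0∞ := (Ioc (0:ℝ) r).indicator (fun _ => (1:ℝ≥0∞)) with hind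
  have h1 : J ρ r = ∫⁻ s, (g * ind) s ∂rdr := by
    rw [J, ← lintegral_indicator measurableSet_Ioc]
    refine lintegral_congr fun x => ?_
    by_cases hx : x ∈ Ioc (0:ℝ) r <;> simp [hx, hind, hg]
  rw [h1]
  refine (ENNReal.lintegral_mul_le_Lp_mul_Lq rdr hpq
    (hρ.ennreal_ofReal.aemeasurable)
    ((measurable_one.indicator measurableSet_Ioc).aemeasurable)).trans (le_of_eq ?_)
  congr 1
  have h2 : ∀ a : ℝ, ((Ioc (0:ℝ) r).indicator (1 : ℝ → ℝ≥0∞) a) ^ t' = ind a := by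
    intro a; by_cases hx : a ∈ Ioc (0:ℝ) r <;>
      simp [hx, hind, ENNReal.zero_rpow_of_pos hpq.symm.pos]
  rw [lintegral_congr h2, hind, lintegral_indicator measurableSet_Ioc, setLIntegral_one]

lemma F_pointwise (hρ : Measurable ρ) (h0 : ∀ s, 0 ≤ ρ s) {r : ℝ} (hr : 0 < r) :
    ENNReal.ofReal (((-(1/2 : ℝ)) * ∫ s in Ioc (0:ℝ) r, ρ s * s)^2 / r^2)
      ≤ (J ρ r) ^ 2 / (ENNReal.ofReal r) ^ 2 := by
  set a := ∫ s in Ioc (0:ℝ) r, ρ s * s with ha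
  have ha0 : 0 ≤ a :=
    setIntegral_nonneg measurableSet_Ioc fun x hx => mul_nonneg (h0 x) hx.1.le
  have key : ((-(1/2 : ℝ)) * a)^2 / r^2 = a^2 / (4 * r^2) := by ring
  rw [key, ENNReal.ofReal_div_of_pos (by positivity), ENNReal.ofReal_pow ha0]
  refine ENNReal.div_le_div (pow_le_pow_left' (ofReal_integral_le hρ h0 r) 2) ?_
  rw [← ENNReal.ofReal_pow hr.le]
  exact ENNReal.ofReal_le_ofReal (by nlinarith)

lemma eLpNorm_eq {f : ℝ → ℝ} (h0 : ∀ s, 0 ≤ f s) {p : ℝ≥0∞} (hp0 : p ≠ 0) (hptop : p ≠ ⊤) :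
    eLpNorm f p rdr = (∫⁻ s, ENNReal.ofReal (f s) ^ p.toReal ∂rdr) ^ (1/p.toReal) := by
  rw [eLpNorm_eq_lintegral_rpow_enorm_toReal hp0 hptop]
  congr 1
  exact lintegral_congr fun x => by rw [Real.enorm_eq_ofReal (h0 x)]

lemma cancel_helper {a b : ℝ≥0∞} (hb0 : b ≠ 0) (hbt : b ≠ ⊤) : b * b * (a / b) = a * b := by
  rw [mul_comm (b*b) (a/b), ← mul_assoc, ENNReal.div_mul_cancel hb0 hbt]

lemma rpow_two (x : ℝ≥0∞) : x ^ (2:ℝ) = x ^ 2 := by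
  rw [show (2:ℝ) = ((2:ℕ):ℝ) by norm_num, ENNReal.rpow_natCast]

lemma sq_halfpow (x : ℝ≥0∞) : (x ^ ((1:ℝ)/2)) ^ 2 = x := by
  rw [← ENNReal.rpow_natCast (x ^ ((1:ℝ)/2)) 2, ← ENNReal.rpow_mul]
  norm_num

end AthetaAux

/-- With `A_θ(r) = -(1/2)∫_0^r ρ(s) s ds`: for `1 < p ≤ ∞`,
`‖A_θ²/r²‖_{L^p(ℝ²)} ≤ C_p ‖ρ‖_{L¹(ℝ²)} ‖ρ‖_{L^p(ℝ²)}`, and moreover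
`‖A_θ²/r²‖_{L^∞} ≤ C ‖ρ‖_{L²(ℝ²)}²` for a universal constant `C`. -/
theorem Atheta_sq_over_r_sq_bounds :
    (∀ p : ℝ≥0∞, 1 < p → ∃ C : ℝ≥0∞, C ≠ ⊤ ∧ ∀ ρ : ℝ → ℝ, Measurable ρ → (∀ s, 0 ≤ ρ s) →
      eLpNorm (fun r => ((-(1/2 : ℝ)) * ∫ s in Ioc (0:ℝ) r, ρ s * s)^2 / r^2) p rdr
        ≤ C * eLpNorm ρ 1 rdr * eLpNorm ρ p rdr) ∧
    (∃ C : ℝ≥0∞, C ≠ ⊤ ∧ ∀ ρ : ℝ → ℝ, Measurable ρ → (∀ s, 0 ≤ ρ s) → ∀ r : ℝ, 0 < r →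
      ENNReal.ofReal (((-(1/2 : ℝ)) * ∫ s in Ioc (0:ℝ) r, ρ s * s)^2 / r^2)
        ≤ C * (eLpNorm ρ 2 rdr)^2) := by
  constructor
  · intro p hp
    by_cases hptop : p = ⊤
    · subst hptop
      refine ⟨1, ENNReal.one_ne_top, fun ρ hρ h0 => ?_⟩
      rw [one_mul, eLpNorm_exponent_top]
      have hbound : ∀ᵐ r ∂rdr,
          (‖((-(1/2 : ℝ)) * ∫ s in Ioc (0:ℝ) r, ρ s * s)^2 / r^2‖₊ : ℝ≥0∞)
            ≤ eLpNorm ρ 1 rdr * eLpNorm ρ ⊤ rdr := by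
        filter_upwards [AthetaAux.rdr_ae_pos] with r hr
        rw [← enorm_eq_nnnorm, Real.enorm_eq_ofReal (div_nonneg (sq_nonneg _) (sq_nonneg _))]
        have hJtop : AthetaAux.J ρ r ≤ eLpNorm ρ ⊤ rdr * (ENNReal.ofReal r)^2 := by
          have h1 : AthetaAux.J ρ r ≤ eLpNormEssSup ρ rdr * rdr (Ioc 0 r) := by
            rw [AthetaAux.J]
            refine (setLIntegral_mono_ae aemeasurable_const ?_).trans_eq
              (setLIntegral_const _ _)
            filter_upwards [ae_le_eLpNormEssSup (f := ρ) (μ := rdr)] with x hx _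
            rw [← Real.enorm_eq_ofReal (h0 x)]; exact hx
          refine h1.trans ?_
          rw [eLpNorm_exponent_top]
          refine mul_le_mul_right ?_ _
          rw [AthetaAux.rdr_Ioc hr.le, ← ENNReal.ofReal_pow hr.le]
          exact ENNReal.ofReal_le_ofReal (by nlinarith)
        calc ENNReal.ofReal (((-(1/2 : ℝ)) * ∫ s in Ioc (0:ℝ) r, ρ s * s)^2 / r^2)
            ≤ (AthetaAux.J ρ r)^2 / (ENNReal.ofReal r)^2 := AthetaAux.F_pointwise hρ h0 hr
          _ ≤ (eLpNorm ρ 1 rdr * (eLpNorm ρ ⊤ rdr * (ENNReal.ofReal r)^2))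
                / (ENNReal.ofReal r)^2 := by
              refine ENNReal.div_le_div ?_ le_rfl
              rw [sq]
              exact mul_le_mul' (AthetaAux.J_le_eLpNorm_one h0 r) hJtop
          _ ≤ eLpNorm ρ 1 rdr * eLpNorm ρ ⊤ rdr := by
              rw [← mul_assoc, mul_div_assoc]
              exact mul_le_of_le_one_right' ENNReal.div_self_le_one
      exact essSup_le_of_ae_le _ hbound
    · have hp0 : p ≠ 0 := (zero_lt_one.trans hp).ne'
      set t := p.toReal with htdef
      have ht : 1 < t := by
        rw [htdef, ← ENNReal.toReal_one]
        exact (ENNReal.toReal_lt_toReal ENNReal.one_ne_top hptop).2 hp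
      have ht0 : (0:ℝ) < t := zero_lt_one.trans ht
      have htne : t ≠ 0 := ht0.ne'
      have ht1 : t - 1 ≠ 0 := (sub_pos.2 ht).ne'
      have ht2 : (0:ℝ) < 2*t - 2 := by linarith
      set t' := t/(t-1) with ht'def
      have hconj : t.HolderConjugate t' := (Real.holderConjugate_iff_eq_conjExponent ht).2 rfl
      set Dh := ENNReal.ofReal (1/(2*t-2)) with hDh
      set D := ENNReal.ofReal (2/(2*t-2)) with hD
      have hDpos : 0 < D := by rw [hD, ENNReal.ofReal_pos]; positivity
      have hDD : D = 2 * Dh := by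
        rw [hD, hDh, show 2/(2*t-2) = 2*(1/(2*t-2)) by ring,
          ENNReal.ofReal_mul (by norm_num : (0:ℝ) ≤ 2), ENNReal.ofReal_ofNat]
      have hC0 : D ^ (1/t) ≠ 0 := (ENNReal.rpow_pos hDpos ENNReal.ofReal_ne_top).ne'
      refine ⟨D ^ (1/t), ENNReal.rpow_ne_top_of_nonneg (by positivity) ENNReal.ofReal_ne_top, ?_⟩
      intro ρ hρ h0
      set N1 := eLpNorm ρ 1 rdr with hN1d
      set Np := eLpNorm ρ p rdr with hNpd
      have hN1eq : N1 = ∫⁻ s, ENNReal.ofReal (ρ s) ∂rdr := by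
        rw [hN1d, eLpNorm_one_eq_lintegral_enorm]
        exact lintegral_congr fun x => by rw [Real.enorm_eq_ofReal (h0 x)]
      have hNpeq : Np = (∫⁻ s, ENNReal.ofReal (ρ s) ^ t ∂rdr) ^ (1/t) :=
        AthetaAux.eLpNorm_eq h0 hp0 hptop
      set f : ℝ → ℝ := fun r => ((-(1/2 : ℝ)) * ∫ s in Ioc (0:ℝ) r, ρ s * s)^2 / r^2 with hf
      have hf0 : ∀ r, 0 ≤ f r := fun r => div_nonneg (sq_nonneg _) (sq_nonneg _)
      have hLHS : eLpNorm f p rdr = (∫⁻ r, ENNReal.ofReal (f r) ^ t ∂rdr) ^ (1/t) :=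
        AthetaAux.eLpNorm_eq hf0 hp0 hptop
      by_cases hN10 : N1 = 0
      · have hJ0 : ∀ r', AthetaAux.J ρ r' = 0 := fun r' =>
          le_zero_iff.1 ((AthetaAux.J_le_eLpNorm_one h0 r').trans_eq hN10)
        have hfz : f =ᵐ[rdr] 0 := by
          filter_upwards [AthetaAux.rdr_ae_pos] with r hr
          have h1 : ENNReal.ofReal (f r) ≤ 0 := by
            simp only [hf]
            refine (AthetaAux.F_pointwise hρ h0 hr).trans (le_of_eq ?_)
            rw [hJ0 r]
            simp
          exact le_antisymm (ENNReal.ofReal_eq_zero.1 (le_zero_iff.1 h1)) (hf0 r)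
        calc eLpNorm f p rdr = 0 := by rw [eLpNorm_congr_ae hfz, eLpNorm_zero]
          _ ≤ _ := zero_le
      have hNp0 : Np ≠ 0 := by
        intro h
        apply hN10
        rw [hNpeq] at h
        have hI : ∫⁻ s, ENNReal.ofReal (ρ s) ^ t ∂rdr = 0 := by
          rcases ENNReal.rpow_eq_zero_iff.1 h with ⟨h1, _⟩ | ⟨_, h2⟩
          · exact h1
          · exfalso
            have : (0:ℝ) < 1/t := by positivity
            linarith
        have hae := (lintegral_eq_zero_iff
          ((ENNReal.continuous_rpow_const (y := t)).measurable.comp hρ.ennreal_ofReal)).1 hI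
        rw [hN1eq, lintegral_eq_zero_iff hρ.ennreal_ofReal]
        filter_upwards [hae] with s hs
        rcases ENNReal.rpow_eq_zero_iff.1 hs with ⟨h1, _⟩ | ⟨_, h2⟩
        · exact h1
        · exfalso; linarith
      by_cases hN1top : N1 = ⊤
      · have hT : D^(1/t) * N1 * Np = ⊤ := by
          rw [hN1top, ENNReal.mul_top hC0, ENNReal.top_mul hNp0]
        exact hT ▸ le_top
      by_cases hNptop : Np = ⊤
      · have hT : D^(1/t) * N1 * Np = ⊤ := by
          rw [hNptop, ENNReal.mul_top (mul_ne_zero hC0 hN10)]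
        exact hT ▸ le_top
      -- main case
      have hNpt0 : Np ^ t ≠ 0 := (ENNReal.rpow_pos (pos_iff_ne_zero.2 hNp0) hNptop).ne'
      have hNptt : Np ^ t ≠ ⊤ := ENNReal.rpow_ne_top_of_nonneg ht0.le hNptop
      have hN1t0 : N1 ^ t ≠ 0 := (ENNReal.rpow_pos (pos_iff_ne_zero.2 hN10) hN1top).ne'
      have hN1tt : N1 ^ t ≠ ⊤ := ENNReal.rpow_ne_top_of_nonneg ht0.le hN1top
      set K := (N1/Np).toReal with hK
      have hdivtop : N1/Np ≠ ⊤ := (ENNReal.div_lt_top hN1top hNp0).ne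
      have hdiv0 : N1/Np ≠ 0 := by
        simp [ENNReal.div_eq_zero_iff, hN10, hNptop]
      have hKpos : 0 < K := ENNReal.toReal_pos hdiv0 hdivtop
      have hofK : ENNReal.ofReal K = N1/Np := ENNReal.ofReal_toReal hdivtop
      set R := K ^ (t/(2*t-2)) with hRdef
      have hR : 0 < R := Real.rpow_pos_of_pos hKpos _
      have hRK1 : R ^ (2*t-2) = K ^ t := by
        rw [hRdef, ← Real.rpow_mul hKpos.le, div_mul_cancel₀ _ ht2.ne']
      have hRK2 : R ^ (2-2*t) = K ^ (-t) := by
        rw [hRdef, ← Real.rpow_mul hKpos.le]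
        congr 1
        field_simp
        ring
      set Φ : ℝ → ℝ≥0∞ := fun r =>
        if r ≤ R then Np ^ (2*t) * (ENNReal.ofReal r) ^ (2*t-4)
        else N1 ^ (2*t) * (ENNReal.ofReal r) ^ (-(2*t)) with hΦ
      have hpt : ∀ᵐ r ∂rdr, ENNReal.ofReal (f r) ^ t ≤ Φ r := by
        filter_upwards [AthetaAux.rdr_ae_pos] with r hr
        have hx0 : ENNReal.ofReal r ≠ 0 := by
          simp only [Ne, ENNReal.ofReal_eq_zero, not_le]; exact hr
        have hxt : ENNReal.ofReal r ≠ ⊤ := ENNReal.ofReal_ne_top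
        have hF : ENNReal.ofReal (f r)
            ≤ (AthetaAux.J ρ r) ^ (2:ℝ) / (ENNReal.ofReal r) ^ (2:ℝ) := by
          rw [AthetaAux.rpow_two, AthetaAux.rpow_two]
          simp only [hf]
          exact AthetaAux.F_pointwise hρ h0 hr
        by_cases hle : r ≤ R
        · simp only [hΦ, if_pos hle]
          have hM2 : rdr (Ioc 0 r) ≤ ENNReal.ofReal r ^ (2:ℝ) := by
            rw [AthetaAux.rdr_Ioc hr.le, ENNReal.ofReal_rpow_of_pos hr]
            apply ENNReal.ofReal_le_ofReal
            rw [show (2:ℝ) = ((2:ℕ):ℝ) by norm_num, Real.rpow_natCast]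
            nlinarith
          have hJb : AthetaAux.J ρ r ≤ Np * (ENNReal.ofReal r) ^ (2/t') := by
            refine (AthetaAux.J_holder hρ hconj r).trans ?_
            rw [← hNpeq]
            refine mul_le_mul_right ?_ _
            calc rdr (Ioc 0 r) ^ (1/t')
                ≤ (ENNReal.ofReal r ^ (2:ℝ)) ^ (1/t') :=
                  ENNReal.rpow_le_rpow hM2 (one_div_nonneg.2 hconj.symm.pos.le)
              _ = (ENNReal.ofReal r) ^ (2/t') := by
                  rw [← ENNReal.rpow_mul]; congr 1; ring
          calc ENNReal.ofReal (f r) ^ t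
              ≤ ((AthetaAux.J ρ r) ^ (2:ℝ) / (ENNReal.ofReal r) ^ (2:ℝ)) ^ t :=
                ENNReal.rpow_le_rpow hF ht0.le
            _ ≤ ((Np * (ENNReal.ofReal r) ^ (2/t')) ^ (2:ℝ)
                  / (ENNReal.ofReal r) ^ (2:ℝ)) ^ t :=
                ENNReal.rpow_le_rpow (ENNReal.div_le_div
                  (ENNReal.rpow_le_rpow hJb (by norm_num)) le_rfl) ht0.le
            _ = Np ^ (2*t) * (ENNReal.ofReal r) ^ (2*t-4) := by
                rw [ENNReal.mul_rpow_of_nonneg _ _ (by norm_num : (0:ℝ) ≤ 2),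
                  ENNReal.div_rpow_of_nonneg _ _ ht0.le,
                  ENNReal.mul_rpow_of_nonneg _ _ ht0.le,
                  ← ENNReal.rpow_mul Np, ← ENNReal.rpow_mul, ← ENNReal.rpow_mul,
                  ← ENNReal.rpow_mul, mul_div_assoc,
                  ← ENNReal.rpow_sub _ _ hx0 hxt]
                congr 1
                rw [show 2 / t' * (2 * t) - 2 * t = 2 * t - 4 from by
                  rw [ht'def]; field_simp; ring]
        · simp only [hΦ, if_neg hle]
          calc ENNReal.ofReal (f r) ^ t
              ≤ ((AthetaAux.J ρ r) ^ (2:ℝ) / (ENNReal.ofReal r) ^ (2:ℝ)) ^ t :=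
                ENNReal.rpow_le_rpow hF ht0.le
            _ ≤ (N1 ^ (2:ℝ) / (ENNReal.ofReal r) ^ (2:ℝ)) ^ t :=
                ENNReal.rpow_le_rpow (ENNReal.div_le_div
                  (ENNReal.rpow_le_rpow (AthetaAux.J_le_eLpNorm_one h0 r) (by norm_num))
                  le_rfl) ht0.le
            _ = N1 ^ (2*t) * (ENNReal.ofReal r) ^ (-(2*t)) := by
                rw [ENNReal.div_rpow_of_nonneg _ _ ht0.le,
                  ← ENNReal.rpow_mul N1, ← ENNReal.rpow_mul,
                  ENNReal.rpow_neg, div_eq_mul_inv]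
      have hmeas1 : Measurable fun r : ℝ => (ENNReal.ofReal r) ^ (2*t-4) :=
        (ENNReal.continuous_rpow_const (y := 2*t-4)).measurable.comp
          ENNReal.measurable_ofReal
      have hmeas2 : Measurable fun r : ℝ => (ENNReal.ofReal r) ^ (-(2*t)) :=
        (ENNReal.continuous_rpow_const (y := -(2*t))).measurable.comp
          ENNReal.measurable_ofReal
      have hp1 : ∫⁻ r in Ioc 0 R, Φ r ∂rdr ≤ N1^t * Np^t * Dh := by
        have hcong : ∫⁻ r in Ioc 0 R, Φ r ∂rdr
            = Np ^ (2*t) * ∫⁻ r in Ioc 0 R, (ENNReal.ofReal r) ^ (2*t-4) ∂rdr := by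
          rw [← lintegral_const_mul _ hmeas1]
          refine setLIntegral_congr_fun measurableSet_Ioc (fun r hr' => ?_)
          simp only [hΦ, if_pos hr'.2]
        rw [hcong, AthetaAux.lintegral_rdr_restrict hmeas1 measurableSet_Ioc
          (fun x hx => hx.1)]
        have hcong2 : ∫⁻ r in Ioc 0 R, ENNReal.ofReal r * (ENNReal.ofReal r)^(2*t-4) ∂volume
            = ∫⁻ r in Ioc 0 R, ENNReal.ofReal (r ^ (2*t-3)) ∂volume := by
          refine setLIntegral_congr_fun measurableSet_Ioc (fun r hr' => ?_)
          have hx0 : ENNReal.ofReal r ≠ 0 := by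
            simp only [Ne, ENNReal.ofReal_eq_zero, not_le]; exact hr'.1
          rw [← ENNReal.ofReal_rpow_of_pos hr'.1]
          nth_rewrite 1 [show ENNReal.ofReal r = ENNReal.ofReal r ^ (1:ℝ) from
            (ENNReal.rpow_one _).symm]
          rw [← ENNReal.rpow_add _ _ hx0 ENNReal.ofReal_ne_top]
          congr 1
          ring
        have hint1 : IntegrableOn (fun r : ℝ => r ^ (2*t-3)) (Ioc 0 R) volume :=
          (intervalIntegrable_iff_integrableOn_Ioc_of_le hR.le).1
            (intervalIntegral.intervalIntegrable_rpow' (by linarith))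
        have hnn1 : 0 ≤ᵐ[volume.restrict (Ioc 0 R)] fun r : ℝ => r^(2*t-3) :=
          ae_restrict_of_forall_mem measurableSet_Ioc fun x hx =>
            Real.rpow_nonneg hx.1.le _
        have hval : ∫ r in Ioc 0 R, r ^ (2*t-3) = K ^ t * (1/(2*t-2)) := by
          rw [← intervalIntegral.integral_of_le hR.le,
            integral_rpow (Or.inl (by linarith : (-1:ℝ) < 2*t-3)),
            Real.zero_rpow (by linarith : 2*t-3+1 ≠ 0),
            show 2*t-3+1 = 2*t-2 by ring, hRK1, sub_zero, div_eq_mul_one_div]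
        rw [hcong2, ← ofReal_integral_eq_lintegral_ofReal hint1 hnn1, hval,
          ENNReal.ofReal_mul (Real.rpow_nonneg hKpos.le _),
          ← ENNReal.ofReal_rpow_of_pos hKpos, hofK, ← hDh, ← mul_assoc]
        refine le_of_eq ?_
        congr 1
        rw [ENNReal.div_rpow_of_nonneg _ _ ht0.le, show 2*t = t + t by ring,
          ENNReal.rpow_add _ _ hNp0 hNptop]
        exact AthetaAux.cancel_helper hNpt0 hNptt
      have hp2 : ∫⁻ r in Ioi R, Φ r ∂rdr ≤ N1^t * Np^t * Dh := by
        have hcong : ∫⁻ r in Ioi R, Φ r ∂rdr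
            = N1 ^ (2*t) * ∫⁻ r in Ioi R, (ENNReal.ofReal r) ^ (-(2*t)) ∂rdr := by
          rw [← lintegral_const_mul _ hmeas2]
          refine setLIntegral_congr_fun measurableSet_Ioi (fun r hr' => ?_)
          simp only [hΦ, if_neg (not_le.2 (show R < r from hr'))]
        rw [hcong, AthetaAux.lintegral_rdr_restrict hmeas2 measurableSet_Ioi
          (fun x hx => hR.trans hx)]
        have hcong2 : ∫⁻ r in Ioi R, ENNReal.ofReal r * (ENNReal.ofReal r)^(-(2*t)) ∂volume
            = ∫⁻ r in Ioi R, ENNReal.ofReal (r ^ (1-2*t)) ∂volume := by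
          refine setLIntegral_congr_fun measurableSet_Ioi (fun r hr' => ?_)
          have hrp : 0 < r := hR.trans hr'
          have hx0 : ENNReal.ofReal r ≠ 0 := by
            simp only [Ne, ENNReal.ofReal_eq_zero, not_le]; exact hrp
          rw [← ENNReal.ofReal_rpow_of_pos hrp]
          nth_rewrite 1 [show ENNReal.ofReal r = ENNReal.ofReal r ^ (1:ℝ) from
            (ENNReal.rpow_one _).symm]
          rw [← ENNReal.rpow_add _ _ hx0 ENNReal.ofReal_ne_top]
          congr 1
        have hint2 : IntegrableOn (fun r : ℝ => r ^ (1-2*t)) (Ioi R) volume :=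
          integrableOn_Ioi_rpow_of_lt (by linarith) hR
        have hnn2 : 0 ≤ᵐ[volume.restrict (Ioi R)] fun r : ℝ => r^(1-2*t) :=
          ae_restrict_of_forall_mem measurableSet_Ioi fun x hx =>
            Real.rpow_nonneg (hR.trans hx).le _
        have hval2 : ∫ r in Ioi R, r ^ (1-2*t) = K ^ (-t) * (1/(2*t-2)) := by
          rw [integral_Ioi_rpow_of_lt (by linarith : 1-2*t < (-1:ℝ)) hR,
            show 1-2*t+1 = 2-2*t by ring, hRK2,
            show (2-2*t : ℝ) = -(2*t-2) by ring, div_neg, neg_div, neg_neg,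
            div_eq_mul_one_div]
        rw [hcong2, ← ofReal_integral_eq_lintegral_ofReal hint2 hnn2, hval2,
          ENNReal.ofReal_mul (Real.rpow_nonneg hKpos.le _),
          ← ENNReal.ofReal_rpow_of_pos hKpos, hofK, ← hDh, ← mul_assoc]
        refine le_of_eq ?_
        rw [mul_comm (N1^t) (Np^t)]
        congr 1
        rw [ENNReal.rpow_neg, ENNReal.div_rpow_of_nonneg _ _ ht0.le,
          ENNReal.inv_div (Or.inl hNptt) (Or.inl hNpt0),
          show 2*t = t + t by ring, ENNReal.rpow_add _ _ hN10 hN1top]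
        exact AthetaAux.cancel_helper hN1t0 hN1tt
      have key : ∫⁻ r, ENNReal.ofReal (f r) ^ t ∂rdr ≤ (N1*Np)^t * D := by
        refine (lintegral_mono_ae hpt).trans ?_
        have hsplit : ∫⁻ r, Φ r ∂rdr
            = (∫⁻ r in Ioc 0 R, Φ r ∂rdr) + ∫⁻ r in Ioi R, Φ r ∂rdr := by
          conv_lhs => rw [← AthetaAux.rdr_restrict_Ioi]
          rw [← Ioc_union_Ioi_eq_Ioi hR.le,
            lintegral_union measurableSet_Ioi Ioc_disjoint_Ioi_same]
        rw [hsplit]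
        refine (add_le_add hp1 hp2).trans (le_of_eq ?_)
        rw [← two_mul, hDD, ENNReal.mul_rpow_of_nonneg _ _ ht0.le]
        ring
      rw [hLHS]
      calc (∫⁻ r, ENNReal.ofReal (f r) ^ t ∂rdr) ^ (1/t)
          ≤ ((N1*Np)^t * D) ^ (1/t) := ENNReal.rpow_le_rpow key (by positivity)
        _ = (N1*Np) * D^(1/t) := by
            rw [ENNReal.mul_rpow_of_nonneg _ _ (by positivity), ← ENNReal.rpow_mul,
              mul_one_div_cancel htne, ENNReal.rpow_one]
        _ = D^(1/t) * N1 * Np := by ring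
  · refine ⟨1, ENNReal.one_ne_top, fun ρ hρ h0 r hr => ?_⟩
    rw [one_mul]
    have h2 : (2:ℝ).HolderConjugate 2 := Real.holderConjugate_iff.mpr ⟨one_lt_two, by norm_num⟩
    have hN : eLpNorm ρ 2 rdr = (∫⁻ s, ENNReal.ofReal (ρ s) ^ (2:ℝ) ∂rdr) ^ ((1:ℝ)/2) := by
      have h := AthetaAux.eLpNorm_eq (f := ρ) h0 (p := 2) (by norm_num) (by norm_num)
      norm_num at h
      convert h using 2 <;> norm_num
    have hJ := AthetaAux.J_holder (ρ := ρ) hρ h2 r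
    calc ENNReal.ofReal (((-(1/2 : ℝ)) * ∫ s in Ioc (0:ℝ) r, ρ s * s)^2 / r^2)
        ≤ (AthetaAux.J ρ r)^2 / (ENNReal.ofReal r)^2 := AthetaAux.F_pointwise hρ h0 hr
      _ ≤ ((∫⁻ s, ENNReal.ofReal (ρ s) ^ (2:ℝ) ∂rdr) ^ ((1:ℝ)/2))^2
            * ((rdr (Ioc 0 r))^((1:ℝ)/2))^2 / (ENNReal.ofReal r)^2 := by
          refine ENNReal.div_le_div ?_ le_rfl
          rw [← mul_pow]
          exact pow_le_pow_left' hJ 2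
      _ ≤ (eLpNorm ρ 2 rdr)^2 := by
          rw [AthetaAux.sq_halfpow, AthetaAux.sq_halfpow, hN, AthetaAux.sq_halfpow]
          have hM : rdr (Ioc 0 r) ≤ (ENNReal.ofReal r)^2 := by
            rw [AthetaAux.rdr_Ioc hr.le, ← ENNReal.ofReal_pow hr.le]
            exact ENNReal.ofReal_le_ofReal (by nlinarith)
          calc (∫⁻ s, ENNReal.ofReal (ρ s) ^ (2:ℝ) ∂rdr) * rdr (Ioc 0 r)
                / (ENNReal.ofReal r)^2
              ≤ (∫⁻ s, ENNReal.ofReal (ρ s) ^ (2:ℝ) ∂rdr) * (ENNReal.ofReal r)^2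
                / (ENNReal.ofReal r)^2 := ENNReal.div_le_div (mul_le_mul_right hM _) le_rfl
            _ = (∫⁻ s, ENNReal.ofReal (ρ s) ^ (2:ℝ) ∂rdr)
                * ((ENNReal.ofReal r)^2 / (ENNReal.ofReal r)^2) := mul_div_assoc _ _ _
            _ ≤ (∫⁻ s, ENNReal.ofReal (ρ s) ^ (2:ℝ) ∂rdr) * 1 :=
                mul_le_mul_right ENNReal.div_self_le_one _
            _ = _ := mul_one _
end
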